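/- Let X and Y be sober topological spaces such that the inverse semigroups I(X,τ) and I(Y,τ) are isomorphic. Then X and Y are homeomorphic. -/

import Mathlib

/-- A partial homeomorphism of a topological space: a homeomorphism between open
subsets (an element of the inverse semigroup `I(X, τ)`). -/
structure PHomeo (X : Type*) [TopologicalSpace X] where
  src : Set X
  tgt : Set X
  src_open : IsOpen src
  tgt_open : IsOpen tgt
  toHomeomorph : ↥src ≃ₜ ↥tgt

/-- The graph of a partial homeomorphism. -/
def PHomeo.maps {X : Type*} [TopologicalSpace X] (t : PHomeo X) (x y : X) : Prop :=
  ∃ h : x ∈ t.src, (t.toHomeomorph ⟨x, h⟩).1 = y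

/-- `mul` is the multiplication of `I(X, τ)`: the product `mul a b` is the composition
"apply `b` first, then `a`", restricted to the largest open set on which it is defined. -/
def IsPHMul {X : Type*} [TopologicalSpace X] (mul : PHomeo X → PHomeo X → PHomeo X) : Prop :=
  ∀ a b : PHomeo X, ∀ x z : X,
    (mul a b).maps x z ↔ ∃ y, b.maps x y ∧ a.maps y z

/-- `inv` is the inversion of `I(X, τ)`. -/
def IsPHInv {X : Type*} [TopologicalSpace X] (inv : PHomeo X → PHomeo X) : Prop :=
  ∀ t : PHomeo X, ∀ x y : X, (inv t).maps x y ↔ t.maps y x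

namespace PHaux

variable {X : Type*} [TopologicalSpace X]

theorem maps_fun {t : PHomeo X} {x y z : X} (h1 : t.maps x y) (h2 : t.maps x z) : y = z := by
  obtain ⟨h, rfl⟩ := h1; obtain ⟨h', rfl⟩ := h2; rfl

theorem maps_inj {t : PHomeo X} {x y z : X} (h1 : t.maps x z) (h2 : t.maps y z) : x = y := by
  obtain ⟨h, hz⟩ := h1; obtain ⟨h', hz'⟩ := h2
  have := t.toHomeomorph.injective (a₁ := ⟨x, h⟩) (a₂ := ⟨y, h'⟩)
    (Subtype.ext (hz.trans hz'.symm))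
  exact congrArg Subtype.val this

theorem mem_src_iff {t : PHomeo X} {x : X} : x ∈ t.src ↔ ∃ y, t.maps x y :=
  ⟨fun h => ⟨_, h, rfl⟩, fun ⟨_, h, _⟩ => h⟩

theorem mem_tgt_iff {t : PHomeo X} {y : X} : y ∈ t.tgt ↔ ∃ x, t.maps x y := by
  constructor
  · intro h
    refine ⟨(t.toHomeomorph.symm ⟨y, h⟩).1, (t.toHomeomorph.symm ⟨y, h⟩).2, ?_⟩
    have : t.toHomeomorph (t.toHomeomorph.symm ⟨y, h⟩) = ⟨y, h⟩ :=
      t.toHomeomorph.apply_symm_apply _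
    exact congrArg Subtype.val this
  · rintro ⟨x, hx, rfl⟩; exact (t.toHomeomorph ⟨x, hx⟩).2

theorem ext_maps {t s : PHomeo X} (h : ∀ x y, t.maps x y ↔ s.maps x y) : t = s := by
  have hsrc : t.src = s.src := by
    ext x; rw [mem_src_iff, mem_src_iff]; exact exists_congr fun y => h x y
  have htgt : t.tgt = s.tgt := by
    ext y; rw [mem_tgt_iff, mem_tgt_iff]; exact exists_congr fun x => h x y
  have hfun : ∀ x (hx : x ∈ t.src) (hx' : x ∈ s.src),
      (t.toHomeomorph ⟨x, hx⟩).1 = (s.toHomeomorph ⟨x, hx'⟩).1 := by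
    intro x hx hx'
    obtain ⟨h2, e2⟩ := (h x _).mp ⟨hx, rfl⟩
    exact e2.symm
  obtain ⟨s1, t1, o1, o1', f⟩ := t
  obtain ⟨s2, t2, o2, o2', g⟩ := s
  obtain rfl : s1 = s2 := hsrc
  obtain rfl : t1 = t2 := htgt
  have : f = g := Homeomorph.ext fun x => Subtype.ext (hfun x.1 x.2 x.2)
  rw [this]

def idOn (U : Set X) (hU : IsOpen U) : PHomeo X :=
  ⟨U, U, hU, hU, Homeomorph.refl _⟩

theorem idOn_maps {U : Set X} {hU : IsOpen U} {x y : X} :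
    (idOn U hU).maps x y ↔ x ∈ U ∧ x = y :=
  ⟨fun ⟨h, e⟩ => ⟨h, e⟩, fun ⟨h, e⟩ => ⟨h, e⟩⟩

theorem idOn_inj {U V : Set X} {hU : IsOpen U} {hV : IsOpen V}
    (h : idOn U hU = idOn V hV) : U = V :=
  congrArg PHomeo.src h

variable {mul : PHomeo X → PHomeo X → PHomeo X}

theorem mul_idOn (hmul : IsPHMul mul) {U V : Set X} {hU : IsOpen U} {hV : IsOpen V} :
    mul (idOn U hU) (idOn V hV) = idOn (U ∩ V) (hU.inter hV) := by
  refine ext_maps fun x z => ?_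
  rw [hmul _ _ x z, idOn_maps]
  constructor
  · rintro ⟨y, hy1, hy2⟩
    rw [idOn_maps] at hy1 hy2
    obtain ⟨hxV, rfl⟩ := hy1
    obtain ⟨hxU, rfl⟩ := hy2
    exact ⟨⟨hxU, hxV⟩, rfl⟩
  · rintro ⟨⟨hxU, hxV⟩, rfl⟩
    exact ⟨x, idOn_maps.mpr ⟨hxV, rfl⟩, idOn_maps.mpr ⟨hxU, rfl⟩⟩

theorem idem_idOn (hmul : IsPHMul mul) {U : Set X} {hU : IsOpen U} :
    mul (idOn U hU) (idOn U hU) = idOn U hU := by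
  rw [mul_idOn hmul]
  exact ext_maps fun x y => by rw [idOn_maps, idOn_maps, Set.inter_self]

theorem idem_eq_idOn (hmul : IsPHMul mul) {e : PHomeo X} (he : mul e e = e) :
    e = idOn e.src e.src_open := by
  have key : ∀ x y, e.maps x y → x = y := by
    intro x y hxy
    have hm : (mul e e).maps x y := by rw [he]; exact hxy
    have h2 : ∃ z, e.maps x z ∧ e.maps z y := (hmul e e x y).mp hm
    obtain ⟨z, h1, h2⟩ := h2
    obtain rfl : z = y := maps_fun h1 hxy
    exact maps_inj hxy h2
  refine ext_maps fun x y => ?_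
  rw [idOn_maps]
  constructor
  · intro hxy
    have hx : x ∈ e.src := by obtain ⟨hx, -⟩ := hxy; exact hx
    exact ⟨hx, key _ _ hxy⟩
  · rintro ⟨hx, rfl⟩
    have hm : e.maps x (e.toHomeomorph ⟨x, hx⟩).1 := ⟨hx, rfl⟩
    have := key _ _ hm
    exact ⟨hx, this.symm⟩

end PHaux


namespace PHaux2

open TopologicalSpace Set

variable {X Y : Type*} [TopologicalSpace X] [TopologicalSpace Y]

/-- The prime open associated to a point. -/
def Pt (x : X) : Opens X := ⟨(closure {x})ᶜ, isClosed_closure.isOpen_compl⟩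

theorem mem_iff_not_le {x : X} {V : Opens X} : x ∈ V ↔ ¬ V ≤ Pt x := by
  constructor
  · intro hx hle
    exact (hle hx) (subset_closure rfl)
  · intro hle
    obtain ⟨z, hzV, hz⟩ : ∃ z ∈ (V : Set X), z ∈ closure ({x} : Set X) := by
      by_contra hc
      push_neg at hc
      exact hle fun z hz => hc z hz
    obtain ⟨w, hwV, rfl⟩ := mem_closure_iff.mp hz V V.2 hzV
    exact hwV

theorem Pt_inj [T0Space X] : Function.Injective (Pt (X := X)) := by
  intro x y h
  have h' : closure ({x} : Set X) = closure ({y} : Set X) := by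
    have := congrArg (fun U : Opens X => ((U : Set X))ᶜ) h
    simpa [Pt] using this
  exact (isGenericPoint_closure (x := x)).eq (isGenericPoint_def.mpr h'.symm)

theorem irr_compl_iff (U : Opens X) :
    IsIrreducible ((U : Set X)ᶜ) ↔
      (U ≠ ⊤ ∧ ∀ V W : Opens X, V ⊓ W ≤ U → V ≤ U ∨ W ≤ U) := by
  have hne : ((U : Set X)ᶜ).Nonempty ↔ U ≠ ⊤ := by
    rw [Set.nonempty_compl]
    constructor
    · intro h h'; exact h (by rw [h']; rfl)
    · intro h h'; exact h (by ext x; simp [h'])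
  constructor
  · rintro ⟨h1, h2⟩
    refine ⟨hne.mp h1, fun V W hVW => ?_⟩
    by_contra hc
    push_neg at hc
    obtain ⟨hV, hW⟩ := hc
    obtain ⟨v, hvV, hvU⟩ := not_subset.mp hV
    obtain ⟨w, hwW, hwU⟩ := not_subset.mp hW
    obtain ⟨z, hz⟩ := h2 V W V.2 W.2 ⟨v, hvU, hvV⟩ ⟨w, hwU, hwW⟩
    exact hz.1 (hVW ⟨hz.2.1, hz.2.2⟩)
  · rintro ⟨h1, h2⟩
    refine ⟨hne.mpr h1, fun v w hv hw hnv hnw => ?_⟩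
    by_contra hc
    have hsub : v ∩ w ⊆ (U : Set X) := by
      intro z hz
      by_contra hzU
      exact hc ⟨z, hzU, hz⟩
    rcases h2 ⟨v, hv⟩ ⟨w, hw⟩ (by rw [← SetLike.coe_subset_coe, Opens.coe_inf]; exact hsub) with h | h
    · obtain ⟨a, haU, hav⟩ := hnv; exact haU (h hav)
    · obtain ⟨b, hbU, hbw⟩ := hnw; exact hbU (h hbw)

end PHaux2

namespace PHaux3

open TopologicalSpace Set PHaux2

variable {X Y : Type*} [TopologicalSpace X] [TopologicalSpace Y]

theorem prime_transfer (J : Opens X ≃o Opens Y) {U : Opens X}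
    (h : U ≠ ⊤ ∧ ∀ V W : Opens X, V ⊓ W ≤ U → V ≤ U ∨ W ≤ U) :
    J U ≠ ⊤ ∧ ∀ V W : Opens Y, V ⊓ W ≤ J U → V ≤ J U ∨ W ≤ J U := by
  obtain ⟨h1, h2⟩ := h
  refine ⟨fun hJ => h1 (J.injective (by rw [hJ, J.map_top])), fun V W hVW => ?_⟩
  have hle : J.symm V ⊓ J.symm W ≤ U := by
    rw [← J.symm.map_inf]
    exact J.symm_apply_le.mpr hVW
  rcases h2 _ _ hle with h | h
  · exact Or.inl (by simpa using J.symm_apply_le.mp h)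
  · exact Or.inr (by simpa using J.symm_apply_le.mp h)

theorem exists_fun [QuasiSober Y] [T0Space Y] (J : Opens X ≃o Opens Y) :
    ∃ f : X → Y, ∀ x, Pt (f x) = J (Pt x) := by
  have hirr : ∀ x : X, IsIrreducible ((J (Pt x) : Set Y)ᶜ) := by
    intro x
    rw [irr_compl_iff]
    refine prime_transfer J ?_
    rw [← irr_compl_iff]
    have : ((Pt x : Set X))ᶜ = closure {x} := by simp [Pt]
    rw [this]
    exact isIrreducible_singleton.closure
  refine ⟨fun x => (hirr x).genericPoint, fun x => ?_⟩
  have hg : IsGenericPoint (hirr x).genericPoint ((J (Pt x) : Set Y)ᶜ) :=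
    (hirr x).isGenericPoint_genericPoint (J (Pt x)).2.isClosed_compl
  apply Opens.ext
  show (closure {(hirr x).genericPoint})ᶜ = (J (Pt x) : Set Y)
  rw [hg.def, compl_compl]

theorem mem_of_pt (J : Opens X ≃o Opens Y) {f : X → Y} (hf : ∀ x, Pt (f x) = J (Pt x))
    {x : X} {V : Opens Y} : f x ∈ V ↔ x ∈ J.symm V := by
  rw [mem_iff_not_le, mem_iff_not_le, hf x, ← J.symm_apply_le]

theorem cont_of_pt (J : Opens X ≃o Opens Y) {f : X → Y} (hf : ∀ x, Pt (f x) = J (Pt x)) :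
    Continuous f := by
  rw [continuous_def]
  intro s hs
  have : f ⁻¹' s = (J.symm ⟨s, hs⟩ : Set X) := by
    ext x
    exact mem_of_pt J hf (V := ⟨s, hs⟩)
  rw [this]
  exact (J.symm ⟨s, hs⟩).2

theorem homeo_of_orderIso [QuasiSober X] [T0Space X] [QuasiSober Y] [T0Space Y]
    (J : Opens X ≃o Opens Y) : Nonempty (X ≃ₜ Y) := by
  obtain ⟨f, hf⟩ := exists_fun J
  obtain ⟨g, hg⟩ := exists_fun J.symm
  have hgf : ∀ x, g (f x) = x := by
    intro x
    apply Pt_inj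
    rw [hg, hf, J.symm_apply_apply]
  have hfg : ∀ y, f (g y) = y := by
    intro y
    apply Pt_inj
    rw [hf, hg, J.apply_symm_apply]
  exact ⟨⟨⟨f, g, hgf, hfg⟩, cont_of_pt J hf, cont_of_pt J.symm hg⟩⟩

end PHaux3


theorem PHaux.mul_idOn_eq_iff {X : Type*} [TopologicalSpace X]
    {mul : PHomeo X → PHomeo X → PHomeo X} (hmul : IsPHMul mul)
    {U V : Set X} {hU : IsOpen U} {hV : IsOpen V} :
    mul (PHaux.idOn U hU) (PHaux.idOn V hV) = PHaux.idOn U hU ↔ U ⊆ V := by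
  rw [PHaux.mul_idOn hmul]
  constructor
  · intro h
    exact Set.inter_eq_left.mp (PHaux.idOn_inj h)
  · intro h
    have hUV : U ∩ V = U := Set.inter_eq_left.mpr h
    exact PHaux.ext_maps fun x y => by
      rw [PHaux.idOn_maps, PHaux.idOn_maps, hUV]

/-- sober spaces with isomorphic inverse semigroups of partial
homeomorphisms are homeomorphic. -/
theorem homeo_of_iso_partial_homeos {X Y : Type*} [TopologicalSpace X] [TopologicalSpace Y]
    [QuasiSober X] [T0Space X] [QuasiSober Y] [T0Space Y]
    (mulX : PHomeo X → PHomeo X → PHomeo X) (hX : IsPHMul mulX)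
    (mulY : PHomeo Y → PHomeo Y → PHomeo Y) (hY : IsPHMul mulY)
    (h : ∃ i : PHomeo X → PHomeo Y,
      Function.Bijective i ∧ ∀ a b, i (mulX a b) = mulY (i a) (i b)) :
    Nonempty (X ≃ₜ Y) := by
  classical
  open PHaux TopologicalSpace in
  obtain ⟨i, ⟨hinj, hsurj⟩, hhom⟩ := h
  -- the induced map on open sets
  set j : Opens X → Opens Y :=
    fun U => ⟨(i (idOn U.1 U.2)).src, (i (idOn U.1 U.2)).src_open⟩ with hj
  have hidem : ∀ U : Opens X, i (idOn U.1 U.2) = idOn (j U).1 (j U).2 := by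
    intro U
    have : mulY (i (idOn U.1 U.2)) (i (idOn U.1 U.2)) = i (idOn U.1 U.2) := by
      rw [← hhom, idem_idOn hX]
    exact idem_eq_idOn hY this
  have hiff : ∀ U V : Opens X, U ≤ V ↔ j U ≤ j V := by
    intro U V
    have c1 : (U ≤ V) ↔ U.1 ⊆ V.1 := Iff.rfl
    have c2 : (j U ≤ j V) ↔ (j U).1 ⊆ (j V).1 := Iff.rfl
    rw [c1, c2, ← mul_idOn_eq_iff hX (hU := U.2) (hV := V.2),
      ← mul_idOn_eq_iff hY (hU := (j U).2) (hV := (j V).2)]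
    rw [← hidem U, ← hidem V, ← hhom]
    exact ⟨fun h => by rw [h], fun h => hinj h⟩
  have hjinj : Function.Injective j := by
    intro U V hUV
    exact le_antisymm ((hiff U V).mpr hUV.le) ((hiff V U).mpr hUV.ge)
  have hjsurj : Function.Surjective j := by
    intro W
    obtain ⟨e, he⟩ := hsurj (idOn W.1 W.2)
    have hee : mulX e e = e := by
      apply hinj
      rw [hhom, he, idem_idOn hY]
    have heq : e = idOn e.src e.src_open := idem_eq_idOn hX hee
    refine ⟨⟨e.src, e.src_open⟩, ?_⟩
    apply Opens.ext
    show (i (idOn e.src e.src_open)).src = W.1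
    rw [← heq, he]
    rfl
  have J : Opens X ≃o Opens Y :=
    ⟨Equiv.ofBijective j ⟨hjinj, hjsurj⟩, fun {a b} => (hiff a b).symm⟩
  exact PHaux3.homeo_of_orderIso J
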